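/- Let g be the 6-dimensional real Lie algebra with basis e_1, …, e_6 whose only nonzero brackets of basis vectors (up to antisymmetry) are ⁅e_1, e_2⁆ = e_5 and ⁅e_3, e_4⁆ = e_6 (so g ≅ N_{3,2} ⊕ N_{3,2}). Then: (a) g admits a basis f_1, …, f_6 whose only nonzero brackets of basis vectors (up to antisymmetry) are ⁅f_1, f_3⁆ = f_5, ⁅f_2, f_4⁆ = f_5, ⁅f_1, f_2⁆ = f_6, ⁅f_3, f_4⁆ = f_6; (b) both (e_i) and (f_i) are nice bases of g; and (c) the two bases are not equivalent: there is no Lie algebra automorphism φ of g, permutation σ of {1,…,6}, and nonzero reals λ_1, …, λ_6 with φ(e_i) = λ_i • f_{σ(i)} for all i. -/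

import Mathlib

/-- The structure constants of a basis of a real Lie algebra. -/
noncomputable def structConst {g : Type*} [LieRing g] [LieAlgebra ℝ g] {n : ℕ}
    (b : Module.Basis (Fin n) ℝ g) (i j k : Fin n) : ℝ :=
  b.repr ⁅b i, b j⁆ k

/-- A basis of a real Lie algebra is *nice*. -/
def IsNiceBasis {g : Type*} [LieRing g] [LieAlgebra ℝ g] {n : ℕ}
    (b : Module.Basis (Fin n) ℝ g) : Prop :=
  (∀ i j, ∃ (k : Fin n) (c : ℝ), ⁅b i, b j⁆ = c • b k) ∧
  (∀ i k j j', structConst b i j k ≠ 0 → structConst b i j' k ≠ 0 → j = j')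

/-- Every element of `Fin 6` is one of the six numerals. -/
lemma fin6_cases : ∀ m : Fin 6, m = 0 ∨ m = 1 ∨ m = 2 ∨ m = 3 ∨ m = 4 ∨ m = 5 := by decide

/-- Integer structure-constant table for the `e` basis. -/
def ceT : Fin 6 → Fin 6 → ℤ := fun i j =>
  if (i,j) = (0,1) then 1 else if (i,j) = (1,0) then -1 else
  if (i,j) = (2,3) then 1 else if (i,j) = (3,2) then -1 else 0

def keT : Fin 6 → Fin 6 → Fin 6 := fun i j =>
  if (i,j) = (0,1) ∨ (i,j) = (1,0) then 4 else 5

/-- Integer structure-constant table for the `f` basis. -/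
def cfT : Fin 6 → Fin 6 → ℤ := fun i j =>
  if (i,j) = (0,2) ∨ (i,j) = (1,3) ∨ (i,j) = (0,1) ∨ (i,j) = (2,3) then 1 else
  if (i,j) = (2,0) ∨ (i,j) = (3,1) ∨ (i,j) = (1,0) ∨ (i,j) = (3,2) then -1 else 0

def kfT : Fin 6 → Fin 6 → Fin 6 := fun i j =>
  if (i,j) = (0,2) ∨ (i,j) = (2,0) ∨ (i,j) = (1,3) ∨ (i,j) = (3,1) then 4 else 5

lemma nice_of_table {g : Type*} [LieRing g] [LieAlgebra ℝ g]
    (b : Module.Basis (Fin 6) ℝ g) (c : Fin 6 → Fin 6 → ℤ) (K : Fin 6 → Fin 6 → Fin 6)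
    (h : ∀ i j, ⁅b i, b j⁆ = (c i j : ℝ) • b (K i j))
    (hu : ∀ i k j j', (c i j ≠ 0 ∧ K i j = k) → (c i j' ≠ 0 ∧ K i j' = k) → j = j') :
    IsNiceBasis b := by
  constructor
  · exact fun i j => ⟨K i j, (c i j : ℝ), h i j⟩
  · intro i k j j' h1 h2
    have key : ∀ j₀, structConst b i j₀ k ≠ 0 → c i j₀ ≠ 0 ∧ K i j₀ = k := by
      intro j₀ hne
      unfold structConst at hne
      rw [h i j₀] at hne
      by_cases hK : K i j₀ = k
      · refine ⟨?_, hK⟩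
        intro hc
        exact hne (by simp [hc])
      · exact absurd (by simp [Module.Basis.repr_self, Finsupp.single_apply, hK]) hne
    exact hu i k j j' (key j h1) (key j' h2)

lemma keyNE : ∀ a b c d : Fin 6, a ≠ c → a ≠ d → c ≠ d →
    cfT a b ≠ 0 → cfT c d ≠ 0 → cfT a c = 0 → cfT a d = 0 → False := by decide

/-- The vectors of the second basis. -/
noncomputable def vVec {g : Type*} [LieRing g] [LieAlgebra ℝ g] (e : Module.Basis (Fin 6) ℝ g) :
    Fin 6 → g :=
  ![e 0 + e 2, e 1 + e 3, e 1 - e 3, e 2 - e 0, e 4 - e 5, e 4 + e 5]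

/-- The inverse vectors. -/
noncomputable def wVec {g : Type*} [LieRing g] [LieAlgebra ℝ g] (e : Module.Basis (Fin 6) ℝ g) :
    Fin 6 → g :=
  ![(2⁻¹ : ℝ) • (e 0 - e 3), (2⁻¹ : ℝ) • (e 1 + e 2), (2⁻¹ : ℝ) • (e 0 + e 3),
    (2⁻¹ : ℝ) • (e 1 - e 2), (2⁻¹ : ℝ) • (e 4 + e 5), (2⁻¹ : ℝ) • (e 5 - e 4)]

section vw
variable {g : Type*} [LieRing g] [LieAlgebra ℝ g] (e : Module.Basis (Fin 6) ℝ g)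

@[simp] lemma vVec_0 : vVec e 0 = e 0 + e 2 := rfl
@[simp] lemma vVec_1 : vVec e 1 = e 1 + e 3 := rfl
@[simp] lemma vVec_2 : vVec e 2 = e 1 - e 3 := rfl
@[simp] lemma vVec_3 : vVec e 3 = e 2 - e 0 := rfl
@[simp] lemma vVec_4 : vVec e 4 = e 4 - e 5 := rfl
@[simp] lemma vVec_5 : vVec e 5 = e 4 + e 5 := rfl
@[simp] lemma wVec_0 : wVec e 0 = (2⁻¹ : ℝ) • (e 0 - e 3) := rfl
@[simp] lemma wVec_1 : wVec e 1 = (2⁻¹ : ℝ) • (e 1 + e 2) := rfl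
@[simp] lemma wVec_2 : wVec e 2 = (2⁻¹ : ℝ) • (e 0 + e 3) := rfl
@[simp] lemma wVec_3 : wVec e 3 = (2⁻¹ : ℝ) • (e 1 - e 2) := rfl
@[simp] lemma wVec_4 : wVec e 4 = (2⁻¹ : ℝ) • (e 4 + e 5) := rfl
@[simp] lemma wVec_5 : wVec e 5 = (2⁻¹ : ℝ) • (e 5 - e 4) := rfl

end vw

set_option maxHeartbeats 1000000 in
/-- Construction of the second nice basis. -/
lemma exists_second_basis {g : Type*} [LieRing g] [LieAlgebra ℝ g]
    (e : Module.Basis (Fin 6) ℝ g)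
    (he : ∀ i j, ⁅e i, e j⁆ = (ceT i j : ℝ) • e (keT i j)) :
    ∃ f : Module.Basis (Fin 6) ℝ g, ∀ i j, ⁅f i, f j⁆ = (cfT i j : ℝ) • f (kfT i j) := by
  have hvw : (e.constr ℝ (vVec e)).comp (e.constr ℝ (wVec e)) = LinearMap.id := by
    apply e.ext
    intro i
    rcases fin6_cases i with rfl | rfl | rfl | rfl | rfl | rfl <;>
      simp only [LinearMap.comp_apply, LinearMap.id_apply, Module.Basis.constr_basis,
        vVec_0, vVec_1, vVec_2, vVec_3, vVec_4, vVec_5,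
        wVec_0, wVec_1, wVec_2, wVec_3, wVec_4, wVec_5,
        map_add, map_sub, map_smul] <;>
      module
  have hwv : (e.constr ℝ (wVec e)).comp (e.constr ℝ (vVec e)) = LinearMap.id := by
    apply e.ext
    intro i
    rcases fin6_cases i with rfl | rfl | rfl | rfl | rfl | rfl <;>
      simp only [LinearMap.comp_apply, LinearMap.id_apply, Module.Basis.constr_basis,
        vVec_0, vVec_1, vVec_2, vVec_3, vVec_4, vVec_5,
        wVec_0, wVec_1, wVec_2, wVec_3, wVec_4, wVec_5,
        map_add, map_sub, map_smul] <;>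
      module
  refine ⟨e.map (LinearEquiv.ofLinear _ _ hvw hwv), ?_⟩
  have hfv : ∀ i, (e.map (LinearEquiv.ofLinear _ _ hvw hwv)) i = vVec e i := by
    intro i
    simp [Module.Basis.map_apply, LinearEquiv.ofLinear_apply, Module.Basis.constr_basis]
  intro i j
  rw [hfv, hfv, hfv]
  rcases fin6_cases i with rfl | rfl | rfl | rfl | rfl | rfl <;>
    rcases fin6_cases j with rfl | rfl | rfl | rfl | rfl | rfl <;>
    simp [cfT, kfT, Prod.mk.injEq, lie_add, add_lie, lie_sub, sub_lie, he, ceT, keT, -Prod.mk_zero_zero, -Prod.mk_one_one] <;>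
    module

set_option maxHeartbeats 1000000 in
theorem two_inequivalent_nice_bases_on_N32_plus_N32
    (g : Type*) [LieRing g] [LieAlgebra ℝ g]
    (e : Module.Basis (Fin 6) ℝ g)
    (h12 : ⁅e 0, e 1⁆ = e 4) (h34 : ⁅e 2, e 3⁆ = e 5)
    (h0 : ∀ i j : Fin 6, i < j →
      (i, j) ∉ ({(0, 1), (2, 3)} : Set (Fin 6 × Fin 6)) → ⁅e i, e j⁆ = 0) :
    IsNiceBasis e ∧
    ∃ f : Module.Basis (Fin 6) ℝ g,
      (⁅f 0, f 2⁆ = f 4 ∧ ⁅f 1, f 3⁆ = f 4 ∧ ⁅f 0, f 1⁆ = f 5 ∧ ⁅f 2, f 3⁆ = f 5 ∧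
        (∀ i j : Fin 6, i < j →
          (i, j) ∉ ({(0, 2), (1, 3), (0, 1), (2, 3)} : Set (Fin 6 × Fin 6)) →
          ⁅f i, f j⁆ = 0)) ∧
      IsNiceBasis f ∧
      ¬ ∃ (φ : g ≃ₗ⁅ℝ⁆ g) (σ : Equiv.Perm (Fin 6)) (l : Fin 6 → ℝ),
          (∀ i, l i ≠ 0) ∧ ∀ i, φ (e i) = l i • f (σ i) := by
  have hz : ∀ i j : Fin 6, (i,j) ≠ (0,1) → (i,j) ≠ (1,0) → (i,j) ≠ (2,3) → (i,j) ≠ (3,2) →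
      ⁅e i, e j⁆ = 0 := by
    intro i j n1 n2 n3 n4
    rcases lt_trichotomy i j with h | h | h
    · refine h0 i j h ?_
      simp only [Set.mem_insert_iff, Set.mem_singleton_iff]
      push_neg
      exact ⟨n1, n3⟩
    · subst h; exact lie_self _
    · rw [← lie_skew, h0 j i h, neg_zero]
      simp only [Set.mem_insert_iff, Set.mem_singleton_iff]
      push_neg
      constructor
      · intro hc; exact n2 (by rw [Prod.mk.injEq] at hc ⊢; exact ⟨hc.2, hc.1⟩)
      · intro hc; exact n4 (by rw [Prod.mk.injEq] at hc ⊢; exact ⟨hc.2, hc.1⟩)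
  have h21 : ⁅e 1, e 0⁆ = -e 4 := by rw [← lie_skew, h12]
  have h43 : ⁅e 3, e 2⁆ = -e 5 := by rw [← lie_skew, h34]
  have he : ∀ i j, ⁅e i, e j⁆ = (ceT i j : ℝ) • e (keT i j) := by
    intro i j
    rcases fin6_cases i with rfl | rfl | rfl | rfl | rfl | rfl <;>
      rcases fin6_cases j with rfl | rfl | rfl | rfl | rfl | rfl <;>
      simp [ceT, keT, Prod.mk.injEq, h12, h34, h21, h43, -Prod.mk_zero_zero, -Prod.mk_one_one] <;>
      (apply hz <;> decide)
  obtain ⟨f, hf⟩ := exists_second_basis e he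
  refine ⟨nice_of_table e ceT keT he (by decide), f, ⟨?_, ?_, ?_, ?_, ?_⟩,
    nice_of_table f cfT kfT hf (by decide), ?_⟩
  · rw [hf]; simp [cfT, kfT, Prod.mk.injEq, -Prod.mk_zero_zero, -Prod.mk_one_one]
  · rw [hf]; simp [cfT, kfT, Prod.mk.injEq, -Prod.mk_zero_zero, -Prod.mk_one_one]
  · rw [hf]; simp [cfT, kfT, Prod.mk.injEq, -Prod.mk_zero_zero, -Prod.mk_one_one]
  · rw [hf]; simp [cfT, kfT, Prod.mk.injEq, -Prod.mk_zero_zero, -Prod.mk_one_one]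
  · intro i j hij hmem
    rw [hf]
    have hc : cfT i j = 0 := by
      simp only [Set.mem_insert_iff, Set.mem_singleton_iff] at hmem
      push_neg at hmem
      obtain ⟨m1, m2, m3, m4⟩ := hmem
      clear hf
      revert hij m1 m2 m3 m4
      revert i j
      decide
    rw [hc]
    simp
  · rintro ⟨φ, σ, l, hl, hphi⟩
    have hce : ∀ i j : Fin 6, ⁅e i, e j⁆ = 0 → ⁅f (σ i), f (σ j)⁆ = 0 := by
      intro i j h
      have h2 : (l i * l j) • ⁅f (σ i), f (σ j)⁆ = 0 := by
        calc (l i * l j) • ⁅f (σ i), f (σ j)⁆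
            = ⁅l i • f (σ i), l j • f (σ j)⁆ := by rw [smul_lie, lie_smul, smul_smul]
          _ = ⁅φ (e i), φ (e j)⁆ := by rw [hphi, hphi]
          _ = φ ⁅e i, e j⁆ := (LieHom.map_lie _ _ _).symm
          _ = 0 := by rw [h]; exact φ.toLieHom.map_zero
      rcases smul_eq_zero.mp h2 with h3 | h3
      · exact absurd h3 (mul_ne_zero (hl i) (hl j))
      · exact h3
    have hcn : ∀ i j k : Fin 6, ⁅e i, e j⁆ = e k → ⁅f (σ i), f (σ j)⁆ ≠ 0 := by
      intro i j k h hzero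
      have h2 : (l i * l j) • ⁅f (σ i), f (σ j)⁆ = l k • f (σ k) := by
        calc (l i * l j) • ⁅f (σ i), f (σ j)⁆
            = ⁅l i • f (σ i), l j • f (σ j)⁆ := by rw [smul_lie, lie_smul, smul_smul]
          _ = ⁅φ (e i), φ (e j)⁆ := by rw [hphi, hphi]
          _ = φ ⁅e i, e j⁆ := (LieHom.map_lie _ _ _).symm
          _ = φ (e k) := by rw [h]
          _ = l k • f (σ k) := hphi k
      rw [hzero, smul_zero] at h2
      exact smul_ne_zero (hl k) (f.ne_zero _) h2.symm
    have t : ∀ a b : Fin 6, ⁅f a, f b⁆ = 0 ↔ cfT a b = 0 := by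
      intro a b
      rw [hf, smul_eq_zero]
      constructor
      · rintro (h | h)
        · exact_mod_cast h
        · exact absurd h (f.ne_zero _)
      · intro h; left; exact_mod_cast h
    have d02 : σ 0 ≠ σ 2 := fun h => absurd (σ.injective h) (by decide)
    have d03 : σ 0 ≠ σ 3 := fun h => absurd (σ.injective h) (by decide)
    have d23 : σ 2 ≠ σ 3 := fun h => absurd (σ.injective h) (by decide)
    exact keyNE (σ 0) (σ 1) (σ 2) (σ 3) d02 d03 d23
      (fun hc => hcn 0 1 4 h12 ((t _ _).mpr hc))
      (fun hc => hcn 2 3 5 h34 ((t _ _).mpr hc))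
      ((t _ _).mp (hce 0 2 (hz 0 2 (by decide) (by decide) (by decide) (by decide))))
      ((t _ _).mp (hce 0 3 (hz 0 3 (by decide) (by decide) (by decide) (by decide))))
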